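/- Suppose a density matrix ρ ∈ D satisfies Q(ρ) = 0 and n̄ ∈ {1,…,d} satisfies ⟨n̄|ρ|n̄⟩ > 0. Then for every μ ∈ {1,…,m} with p_{μ,ρ} > 0, one has tr(M_μ ρ M_μ†) = |c_{μ,n̄}|². -/

import Mathlib

open Matrix BigOperators
open scoped ComplexOrder

/-- `p_{μ,ρ} = tr(M_μ ρ M_μ†)` (a real number since `ρ` is positive semidefinite). -/
noncomputable def pMeas {d m : ℕ} (M : Fin m → Matrix (Fin d) (Fin d) ℂ)
    (ρ : Matrix (Fin d) (Fin d) ℂ) (μ : Fin m) : ℝ :=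
  ((M μ * ρ * (M μ)ᴴ).trace).re

/-- `Q(ρ) = (1/4) Σ_n Σ_{μ,ν} q_{μ,ν,n}(ρ)`. -/
noncomputable def Qfun {d m : ℕ} (M : Fin m → Matrix (Fin d) (Fin d) ℂ)
    (c : Fin m → Fin d → ℂ) (ρ : Matrix (Fin d) (Fin d) ℂ) : ℝ :=
  (1 / 4) * ∑ n, ∑ μ, ∑ ν,
    if 0 < pMeas M ρ μ * pMeas M ρ ν then
      pMeas M ρ μ * pMeas M ρ ν *
        (Complex.normSq (c μ n) * (ρ n n).re / pMeas M ρ μ -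
          Complex.normSq (c ν n) * (ρ n n).re / pMeas M ρ ν) ^ 2
    else 0

lemma diag_trace_re {d : ℕ} (c : Fin d → ℂ) (ρ : Matrix (Fin d) (Fin d) ℂ) :
    ((Matrix.diagonal c * ρ * (Matrix.diagonal c)ᴴ).trace).re
      = ∑ n, Complex.normSq (c n) * (ρ n n).re := by
  rw [diagonal_conjTranspose, trace]
  simp only [diag, mul_diagonal, diagonal_mul, Complex.re_sum, Pi.star_apply]
  congr 1; funext n
  rw [mul_comm (c n) (ρ n n), mul_assoc,
    show star (c n) = (starRingEnd ℂ) (c n) from rfl, Complex.mul_conj,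
    mul_comm (ρ n n), Complex.re_ofReal_mul]

lemma diag_re_nonneg {d : ℕ} (ρ : Matrix (Fin d) (Fin d) ℂ) (h : ρ.PosSemidef)
    (n : Fin d) : 0 ≤ (ρ n n).re := by
  have := h.diag_nonneg (i := n)
  exact (Complex.le_def.mp this).1

/-- If `Q(ρ) = 0` and `⟨n̄|ρ|n̄⟩ > 0`, then for every `μ` with `p_{μ,ρ} > 0`
one has `tr(M_μ ρ M_μ†) = |c_{μ,n̄}|²`. -/
theorem stmt_3 (d m : ℕ) (hd : 1 ≤ d) (hm : 1 ≤ m)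
    (M : Fin m → Matrix (Fin d) (Fin d) ℂ) (c : Fin m → Fin d → ℂ)
    (hQND : ∀ μ, M μ = Matrix.diagonal (c μ))
    (hKraus : ∑ μ, (M μ)ᴴ * M μ = 1)
    (ρ : Matrix (Fin d) (Fin d) ℂ)
    (hρ : ρ.PosSemidef ∧ ρ.trace = 1)
    (hQ : Qfun M c ρ = 0)
    (nbar : Fin d) (hnbar : 0 < (ρ nbar nbar).re) :
    ∀ μ, 0 < pMeas M ρ μ → pMeas M ρ μ = Complex.normSq (c μ nbar) := by
  have hdiag : ∀ n, 0 ≤ (ρ n n).re := diag_re_nonneg ρ hρ.1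
  -- pMeas as a sum
  have hp : ∀ μ, pMeas M ρ μ = ∑ n, Complex.normSq (c μ n) * (ρ n n).re := by
    intro μ; rw [pMeas, hQND μ, diag_trace_re]
  have hp_nonneg : ∀ μ, 0 ≤ pMeas M ρ μ := by
    intro μ; rw [hp μ]
    exact Finset.sum_nonneg fun n _ =>
      mul_nonneg (Complex.normSq_nonneg _) (hdiag n)
  -- sum of normSq over μ equals 1
  have hcsum : ∀ n, ∑ μ, Complex.normSq (c μ n) = 1 := by
    intro n
    have h1 : (∑ μ, (M μ)ᴴ * M μ) n n = (1 : Matrix (Fin d) (Fin d) ℂ) n n := by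
      rw [hKraus]
    have h2 : ∀ μ, ((M μ)ᴴ * M μ) n n = (Complex.normSq (c μ n) : ℂ) := by
      intro μ
      rw [hQND μ, diagonal_conjTranspose, diagonal_mul_diagonal, diagonal_apply_eq]
      rw [show star (c μ) n = (starRingEnd ℂ) (c μ n) from rfl,
        mul_comm, Complex.mul_conj]
    rw [Matrix.sum_apply] at h1
    simp only [h2, one_apply_eq] at h1
    exact_mod_cast h1
  -- total probability is 1
  have hptot : ∑ μ, pMeas M ρ μ = 1 := by
    have : ∑ μ, pMeas M ρ μ = ∑ n : Fin d, (ρ n n).re := by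
      simp only [hp]
      rw [Finset.sum_comm]
      congr 1; funext n
      rw [← Finset.sum_mul, hcsum n, one_mul]
    rw [this]
    have := hρ.2
    have htr : (ρ.trace).re = 1 := by rw [this]; simp
    rw [← htr, trace]
    simp [Complex.re_sum, diag]
  -- all summands of Q are zero
  have hterm : ∀ n, ∀ μ ν, 0 < pMeas M ρ μ → 0 < pMeas M ρ ν →
      Complex.normSq (c μ n) * (ρ n n).re / pMeas M ρ μ
        = Complex.normSq (c ν n) * (ρ n n).re / pMeas M ρ ν := by
    intro n μ ν hμ hν
    have hQ' : ∑ n, ∑ μ, ∑ ν,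
        (if 0 < pMeas M ρ μ * pMeas M ρ ν then
          pMeas M ρ μ * pMeas M ρ ν *
            (Complex.normSq (c μ n) * (ρ n n).re / pMeas M ρ μ -
              Complex.normSq (c ν n) * (ρ n n).re / pMeas M ρ ν) ^ 2
        else 0) = 0 := by
      have := hQ
      rw [Qfun] at this
      linarith
    have hnn : ∀ n' : Fin d, ∀ μ' ν' : Fin m,
        0 ≤ (if 0 < pMeas M ρ μ' * pMeas M ρ ν' then
          pMeas M ρ μ' * pMeas M ρ ν' *
            (Complex.normSq (c μ' n') * (ρ n' n').re / pMeas M ρ μ' -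
              Complex.normSq (c ν' n') * (ρ n' n').re / pMeas M ρ ν') ^ 2
        else 0) := by
      intro n' μ' ν'
      split
      · exact mul_nonneg (le_of_lt (by assumption)) (sq_nonneg _)
      · exact le_rfl
    have key : (if 0 < pMeas M ρ μ * pMeas M ρ ν then
          pMeas M ρ μ * pMeas M ρ ν *
            (Complex.normSq (c μ n) * (ρ n n).re / pMeas M ρ μ -
              Complex.normSq (c ν n) * (ρ n n).re / pMeas M ρ ν) ^ 2
        else 0) = 0 := by
      have h1 := Finset.sum_eq_zero_iff_of_nonneg
        (fun n' _ => Finset.sum_nonneg fun μ' _ => Finset.sum_nonneg fun ν' _ => hnn n' μ' ν')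
        |>.mp hQ' n (Finset.mem_univ n)
      have h2 := Finset.sum_eq_zero_iff_of_nonneg
        (fun μ' _ => Finset.sum_nonneg fun ν' _ => hnn n μ' ν') |>.mp h1 μ (Finset.mem_univ μ)
      exact Finset.sum_eq_zero_iff_of_nonneg (fun ν' _ => hnn n μ ν') |>.mp h2 ν
        (Finset.mem_univ ν)
    have hpos : 0 < pMeas M ρ μ * pMeas M ρ ν := mul_pos hμ hν
    rw [if_pos hpos] at key
    have := mul_eq_zero.mp key
    rcases this with h | h
    · exact absurd h (ne_of_gt hpos)
    · have := pow_eq_zero_iff (n := 2) (by norm_num) |>.mp h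
      linarith
  -- main argument
  intro μ hμ
  set p := pMeas M ρ μ with hpdef
  set L := Complex.normSq (c μ nbar) / p with hL
  have hLν : ∀ ν, Complex.normSq (c ν nbar) = L * pMeas M ρ ν := by
    intro ν
    rcases lt_or_eq_of_le (hp_nonneg ν) with hν | hν
    · have h := hterm nbar μ ν hμ hν
      have : Complex.normSq (c μ nbar) / p = Complex.normSq (c ν nbar) / pMeas M ρ ν := by
        field_simp at h ⊢
        have h' := (div_eq_iff (ne_of_gt hμ)).mp h
        linarith [h']
      rw [hL, this]
      field_simp
    · -- pMeas ν = 0 forces normSq (c ν nbar) = 0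
      have h0 : Complex.normSq (c ν nbar) * (ρ nbar nbar).re = 0 := by
        have hsum : ∑ n, Complex.normSq (c ν n) * (ρ n n).re = 0 := by
          rw [← hp ν, ← hν]
        exact Finset.sum_eq_zero_iff_of_nonneg
          (fun n _ => mul_nonneg (Complex.normSq_nonneg _) (hdiag n)) |>.mp hsum nbar
          (Finset.mem_univ nbar)
      have : Complex.normSq (c ν nbar) = 0 := by
        rcases mul_eq_zero.mp h0 with h | h
        · exact h
        · linarith
      rw [this, ← hν]; ring
  have hsum1 : (1 : ℝ) = L * 1 := by
    calc (1 : ℝ) = ∑ ν, Complex.normSq (c ν nbar) := (hcsum nbar).symm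
    _ = ∑ ν, L * pMeas M ρ ν := by simp only [hLν]
    _ = L * ∑ ν, pMeas M ρ ν := by rw [Finset.mul_sum]
    _ = L * 1 := by rw [hptot]
  have hL1 : L = 1 := by linarith
  have := hLν μ
  rw [hL1, one_mul] at this
  exact this.symm
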